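/- Let G be a non-degenerate [n,k,d]_q code with k > 2 and Singleton defect s. If n > s(q+1) + k − 1, then G is projective, i.e., the associated projective system has all multiplicities equal to 1 (equivalently d^⊥ ≥ 3). -/

import Mathlib

/-- The number of points (with multiplicity) of the projective system `G`
lying on the hyperplane `ker φ`. -/
noncomputable def hypCount {F : Type*} [Field F] [DecidableEq F] {n k : ℕ}
    (G : Fin n → Fin k → F) (φ : (Fin k → F) →ₗ[F] F) : ℕ :=
  (Finset.univ.filter fun i => φ (G i) = 0).card

/-- `G` is (the projective system of) a non-degenerate linear `[n,k,d]_q` code: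
an `n`-multiset of nonzero points spanning `PG(k-1,q)`, every hyperplane containing
at most `n - d` points, and some hyperplane (a secant) containing exactly `n - d`. -/
def IsCodePS (F : Type*) [Field F] [DecidableEq F] (n k d : ℕ)
    (G : Fin n → Fin k → F) : Prop :=
  0 < d ∧ (∀ i, G i ≠ 0) ∧ Submodule.span F (Set.range G) = ⊤ ∧
  (∀ φ : (Fin k → F) →ₗ[F] F, φ ≠ 0 → hypCount G φ + d ≤ n) ∧
  (∃ φ : (Fin k → F) →ₗ[F] F, φ ≠ 0 ∧ hypCount G φ + d = n)

/-- If `G` is a non-degenerate `[n,k,d]_q` code with `k > 2`, Singleton defect `s`,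
and `n > s(q+1) + k - 1`, then `G` is projective: no two points of the projective
system coincide (all multiplicities are `1`). -/
theorem long_code_projective (F : Type*) [Field F] [Fintype F] [DecidableEq F]
    (n k d s : ℕ) (G : Fin n → Fin k → F)
    (hk : 2 < k) (hG : IsCodePS F n k d G) (hs : d + k + s = n + 1)
    (hn : s * (Fintype.card F + 1) + k ≤ n) :
    ∀ i j : Fin n, (∃ c : F, G i = c • G j) → i = j := by
  classical
  obtain ⟨hd, hnz, hspan, hbound, φ0, hφ0, hsec⟩ := hG
  intro i j hcij
  by_contra hij
  obtain ⟨c, hc⟩ := hcij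
  set q := Fintype.card F with hq
  set P := G j with hP
  have hPmem : P ∈ Set.range G := ⟨j, rfl⟩
  obtain ⟨b, hbsub, hPb, hbspan, hbind⟩ :=
    exists_linearIndepOn_id_extension ((linearIndepOn_singleton_iff (R := F) (v := id)).mpr (hnz j))
      (Set.singleton_subset_iff.mpr hPmem)
  have hPb' : P ∈ b := hPb rfl
  -- b is finite
  have hbfin : b.Finite := (Set.finite_range G).subset hbsub
  haveI : Fintype b := hbfin.fintype
  -- basis
  have hspanb : ⊤ ≤ Submodule.span F (Set.range ((↑) : b → (Fin k → F))) := by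
    rw [Subtype.range_coe]
    rw [← hspan]
    exact Submodule.span_le.mpr hbspan
  let B : Module.Basis b F (Fin k → F) := Module.Basis.mk hbind hspanb
  have hBapp : ∀ x : b, B x = (x : Fin k → F) := fun x => Module.Basis.mk_apply _ _ x
  have hcard : Fintype.card b = k := by
    have := Module.finrank_eq_card_basis B
    rw [Module.finrank_fin_fun] at this
    omega
  -- pick p, u, v distinct in b
  let p : b := ⟨P, hPb'⟩
  have hcard3 : 1 < (Finset.univ.erase p).card := by
    rw [Finset.card_erase_of_mem (Finset.mem_univ p), Finset.card_univ, hcard]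
    omega
  obtain ⟨u, hu, v, hv, huv⟩ := Finset.one_lt_card.mp hcard3
  have hup : u ≠ p := Finset.ne_of_mem_erase hu
  have hvp : v ≠ p := Finset.ne_of_mem_erase hv
  -- c ≠ 0
  have hc0 : c ≠ 0 := by
    rintro rfl
    rw [zero_smul] at hc
    exact hnz i hc
  -- the two functionals
  let ψ₁ : (Fin k → F) →ₗ[F] F := B.coord u
  let ψ₂ : (Fin k → F) →ₗ[F] F := B.coord v
  -- family of hyperplanes
  let Φ : Option F → ((Fin k → F) →ₗ[F] F) := fun m =>
    match m with
    | none => ψ₂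
    | some a => ψ₁ - a • ψ₂
  have hcoord : ∀ (w x : b), B.coord w (B x) = if x = w then 1 else 0 := by
    intro w x
    rw [Module.Basis.coord_apply, Module.Basis.repr_self]
    simp [Finsupp.single_apply]
  -- each Φ m is nonzero
  have hΦne : ∀ m, Φ m ≠ 0 := by
    intro m hm
    cases m with
    | none =>
      have : ψ₂ (B v) = 0 := by rw [show ψ₂ = Φ none from rfl, hm]; rfl
      rw [show ψ₂ (B v) = B.coord v (B v) from rfl, hcoord] at this
      simp at this
    | some a =>
      have : (ψ₁ - a • ψ₂) (B u) = 0 := by rw [show ψ₁ - a • ψ₂ = Φ (some a) from rfl, hm]; rfl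
      rw [LinearMap.sub_apply, LinearMap.smul_apply,
        show ψ₁ (B u) = B.coord u (B u) from rfl,
        show ψ₂ (B u) = B.coord v (B u) from rfl, hcoord, hcoord] at this
      rw [if_neg huv] at this; simp at this
  -- the multiplicity weight of each point
  let w : Fin n → ℕ := fun t => (Finset.univ.filter fun m : Option F => Φ m (G t) = 0).card
  -- every point lies on at least one of the hyperplanes
  have hw1 : ∀ t, 1 ≤ w t := by
    intro t
    rw [Nat.one_le_iff_ne_zero, ← Nat.pos_iff_ne_zero, Finset.card_pos]
    by_cases h2 : ψ₂ (G t) = 0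
    · exact ⟨none, Finset.mem_filter.mpr ⟨Finset.mem_univ _, h2⟩⟩
    · refine ⟨some (ψ₁ (G t) / ψ₂ (G t)), Finset.mem_filter.mpr ⟨Finset.mem_univ _, ?_⟩⟩
      show (ψ₁ - (ψ₁ (G t) / ψ₂ (G t)) • ψ₂) (G t) = 0
      rw [LinearMap.sub_apply, LinearMap.smul_apply, smul_eq_mul, div_mul_cancel₀ _ h2,
        sub_self]
  -- the set of indices whose point lies on all hyperplanes
  let T : Finset (Fin n) := Finset.univ.filter fun t => ψ₁ (G t) = 0 ∧ ψ₂ (G t) = 0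
  have hwT : ∀ t ∈ T, w t = q + 1 := by
    intro t ht
    obtain ⟨-, h1, h2⟩ := Finset.mem_filter.mp ht
    have : (Finset.univ.filter fun m : Option F => Φ m (G t) = 0) = Finset.univ := by
      refine Finset.eq_univ_iff_forall.mpr fun m => Finset.mem_filter.mpr ⟨Finset.mem_univ _, ?_⟩
      match m with
      | none => exact h2
      | some a =>
        show (ψ₁ - a • ψ₂) (G t) = 0
        rw [LinearMap.sub_apply, LinearMap.smul_apply, h1, h2, smul_zero, sub_zero]
    rw [show w t = (Finset.univ.filter fun m : Option F => Φ m (G t) = 0).card from rfl, this,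
      Finset.card_univ, Fintype.card_option]
  -- choice of index for each basis vector
  have hex : ∀ x : b, ∃ t : Fin n, G t = (x : Fin k → F) := fun x => hbsub x.2
  let e : b → Fin n := fun x => (hex x).choose
  have hGe : ∀ x : b, G (e x) = (x : Fin k → F) := fun x => (hex x).choose_spec
  -- i and j are in T
  have hψP : ∀ w : b, w ≠ p → B.coord w P = 0 := by
    intro w hw
    have : P = B p := (hBapp p).symm
    rw [this, hcoord, if_neg (Ne.symm hw)]
  have hjT : j ∈ T := by
    refine Finset.mem_filter.mpr ⟨Finset.mem_univ _, ?_, ?_⟩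
    · exact hψP u hup
    · exact hψP v hvp
  have hiT : i ∈ T := by
    refine Finset.mem_filter.mpr ⟨Finset.mem_univ _, ?_, ?_⟩
    · show B.coord u (G i) = 0
      rw [hc, map_smul, hψP u hup, smul_zero]
    · show B.coord v (G i) = 0
      rw [hc, map_smul, hψP v hvp, smul_zero]
  -- the other basis vectors give further elements of T
  let X : Finset b := Finset.univ.filter fun x => x ≠ p ∧ x ≠ u ∧ x ≠ v
  have hXT : ∀ x ∈ X, e x ∈ T := by
    intro x hx
    obtain ⟨-, hxp, hxu, hxv⟩ := Finset.mem_filter.mp hx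
    refine Finset.mem_filter.mpr ⟨Finset.mem_univ _, ?_, ?_⟩
    · show B.coord u (G (e x)) = 0
      rw [hGe, ← hBapp, hcoord, if_neg hxu]
    · show B.coord v (G (e x)) = 0
      rw [hGe, ← hBapp, hcoord, if_neg hxv]
  have hXj : ∀ x ∈ X, e x ≠ j := by
    intro x hx hxj
    obtain ⟨-, hxp, -, -⟩ := Finset.mem_filter.mp hx
    apply hxp
    apply Subtype.ext
    rw [← hGe x, hxj]
  have hXi : ∀ x ∈ X, e x ≠ i := by
    intro x hx hxi
    obtain ⟨-, hxp, -, -⟩ := Finset.mem_filter.mp hx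
    have hxval : (x : Fin k → F) = c • P := by rw [← hGe x, hxi, hc]
    have h2 : B x = c • B p := by rw [hBapp, hBapp]; exact hxval
    have h1 : B.repr (B x) = Finsupp.single x 1 := B.repr_self x
    rw [h2, map_smul, B.repr_self] at h1
    have h3 := DFunLike.congr_fun h1 x
    rw [Finsupp.smul_apply, Finsupp.single_apply, Finsupp.single_apply,
      if_neg (fun h => hxp (Subtype.ext (congrArg _ h)).symm ), if_pos rfl] at h3
    · simp at h3
  -- cardinality of X
  have hXcard : X.card + 3 = k := by
    have hXeq : X = ((Finset.univ.erase p).erase u).erase v := by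
      ext x
      simp only [X, Finset.mem_filter, Finset.mem_univ, true_and, Finset.mem_erase]
      tauto
    rw [hXeq, Finset.card_erase_of_mem, Finset.card_erase_of_mem, Finset.card_erase_of_mem,
      Finset.card_univ, hcard]
    · omega
    · exact Finset.mem_univ p
    · exact Finset.mem_erase.mpr ⟨hup, Finset.mem_univ u⟩
    · exact Finset.mem_erase.mpr ⟨Ne.symm huv, Finset.mem_erase.mpr ⟨hvp, Finset.mem_univ v⟩⟩
  -- T has at least k - 1 elements
  have hTcard : k ≤ T.card + 1 := by
    have hsub : insert i (insert j (X.image e)) ⊆ T := by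
      intro t ht
      rcases Finset.mem_insert.mp ht with rfl | ht
      · exact hiT
      rcases Finset.mem_insert.mp ht with rfl | ht
      · exact hjT
      obtain ⟨x, hx, rfl⟩ := Finset.mem_image.mp ht
      exact hXT x hx
    have hinj : ∀ x ∈ X, ∀ y ∈ X, e x = e y → x = y := by
      intro x _ y _ hxy
      apply Subtype.ext
      rw [← hGe x, ← hGe y, hxy]
    have himg : (X.image e).card = X.card := Finset.card_image_of_injOn hinj
    have hjmem : j ∉ X.image e := by
      intro hmem
      obtain ⟨x, hx, hex'⟩ := Finset.mem_image.mp hmem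
      exact hXj x hx hex'
    have himem : i ∉ insert j (X.image e) := by
      intro hmem
      rcases Finset.mem_insert.mp hmem with h | h
      · exact hij h
      obtain ⟨x, hx, hex'⟩ := Finset.mem_image.mp h
      exact hXi x hx hex'
    have hc1 : (insert i (insert j (X.image e))).card = X.card + 2 := by
      rw [Finset.card_insert_of_notMem himem, Finset.card_insert_of_notMem hjmem, himg]
    have := Finset.card_le_card hsub
    omega
  -- double counting
  have hsum : ∑ m : Option F, hypCount G (Φ m) = ∑ t : Fin n, w t := by
    calc ∑ m : Option F, hypCount G (Φ m)
        = ∑ m : Option F, ∑ t : Fin n, (if Φ m (G t) = 0 then 1 else 0) := by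
          refine Finset.sum_congr rfl fun m _ => ?_
          rw [hypCount, Finset.card_filter]
      _ = ∑ t : Fin n, ∑ m : Option F, (if Φ m (G t) = 0 then 1 else 0) := Finset.sum_comm
      _ = ∑ t : Fin n, w t := by
          refine Finset.sum_congr rfl fun t _ => ?_
          rw [show w t = (Finset.univ.filter fun m : Option F => Φ m (G t) = 0).card from rfl,
            Finset.card_filter]
  -- upper bound
  have hA : ∑ t : Fin n, w t + (q + 1) * d ≤ (q + 1) * n := by
    have h1 : ∑ m : Option F, (hypCount G (Φ m) + d) ≤ ∑ _m : Option F, n :=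
      Finset.sum_le_sum fun m _ => hbound _ (hΦne m)
    rw [Finset.sum_add_distrib, Finset.sum_const, Finset.sum_const, Finset.card_univ,
      Fintype.card_option, smul_eq_mul, smul_eq_mul, hsum] at h1
    calc ∑ t : Fin n, w t + (q + 1) * d = (q + 1) * d + ∑ t : Fin n, w t := by ring
      _ ≤ (q + 1) * n := by rw [mul_comm (q+1) d, mul_comm (q+1) n] at *; omega
  -- lower bound
  have hB : n + q * T.card ≤ ∑ t : Fin n, w t := by
    have h1 : ∑ t : Fin n, (if t ∈ T then q + 1 else 1) ≤ ∑ t : Fin n, w t := by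
      refine Finset.sum_le_sum fun t _ => ?_
      by_cases ht : t ∈ T
      · rw [if_pos ht, hwT t ht]
      · rw [if_neg ht]; exact hw1 t
    have h2 : ∑ t : Fin n, (if t ∈ T then q + 1 else 1) = n + q * T.card := by
      have : ∀ t : Fin n, (if t ∈ T then q + 1 else 1) = 1 + (if t ∈ T then q else 0) := by
        intro t; by_cases ht : t ∈ T <;> simp [ht, Nat.add_comm]
      rw [Finset.sum_congr rfl fun t _ => this t, Finset.sum_add_distrib, Finset.sum_const,
        Finset.card_univ, Fintype.card_fin, smul_eq_mul, mul_one, Finset.sum_ite_mem,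
        Finset.univ_inter, Finset.sum_const, smul_eq_mul, mul_comm]
    omega
  -- final arithmetic
  have hqs : q * (d + k + s) = q * (n + 1) := by rw [hs]
  have hqT : q * k ≤ q * (T.card + 1) := Nat.mul_le_mul (le_refl q) hTcard
  nlinarith [hA, hB, hqs, hqT, hn, hs, hd]
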